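/- arXiv:1503.05968 — 4 statements merged into one kernel-verified Lean document; each statement's English description precedes it below -/
import Mathlib

section
/- Let A be a stable n×n real matrix and L a symmetric positive semidefinite n×n real matrix. Then the integral R = ∫₀^∞ exp(A t) L exp(Aᵀ t) dt converges, R is symmetric positive semidefinite, R is the unique n×n matrix satisfying the Lyapunov equation A R + R Aᵀ + L = 0, and if L is positive definite then R is positive definite. -/
open Matrix MeasureTheory

/-- A real square matrix is *stable* if every eigenvalue (over `ℂ`) has strictly
negative real part. -/
def IsStable {n : ℕ} (A : Matrix (Fin n) (Fin n) ℝ) : Prop :=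
  ∀ μ ∈ spectrum ℂ (A.map Complex.ofReal), μ.re < 0

section Aux

open NormedSpace Module

attribute [local instance] Matrix.linftyOpNormedAddCommGroup Matrix.linftyOpNormedRing
  Matrix.linftyOpNormedAlgebra

namespace LyapAux

variable {n : ℕ}

lemma eig_exp (M : Matrix (Fin n) (Fin n) ℂ) (μ : ℂ) (v : Fin n → ℂ)
    (hv : M *ᵥ v = μ • v) : exp M *ᵥ v = Complex.exp μ • v := by
  have hpow : ∀ k : ℕ, (M ^ k) *ᵥ v = (μ ^ k) • v := by
    intro k
    induction k with
    | zero => simp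
    | succ k ih => rw [pow_succ', pow_succ', ← Matrix.mulVec_mulVec, ih, Matrix.mulVec_smul, hv,
        smul_smul, mul_comm]
  have hsum := expSeries_summable' (𝕂 := ℂ) M
  let g : Matrix (Fin n) (Fin n) ℂ →ₗ[ℂ] (Fin n → ℂ) :=
    { toFun := fun N => N *ᵥ v
      map_add' := fun a b => Matrix.add_mulVec a b v
      map_smul' := fun c N => (Matrix.smul_mulVec c N v) }
  have hg : Continuous g := LinearMap.continuous_of_finiteDimensional g
  have := (hsum.hasSum.map g hg).tsum_eq
  rw [exp_eq_tsum ℂ]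
  have : g (∑' k : ℕ, ((k.factorial : ℂ)⁻¹ • M ^ k)) = ∑' k : ℕ, g ((k.factorial : ℂ)⁻¹ • M ^ k) := this.symm
  simp only [g, LinearMap.coe_mk, AddHom.coe_mk] at this
  rw [this]
  have h2 : ∀ k : ℕ, ((k.factorial : ℂ)⁻¹ • M ^ k) *ᵥ v = ((k.factorial : ℂ)⁻¹ * μ ^ k) • v := by
    intro k
    rw [Matrix.smul_mulVec, hpow, smul_smul]
  simp only [h2]
  rw [Summable.tsum_smul_const, Complex.exp_eq_exp_ℂ, exp_eq_tsum ℂ]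
  · simp [smul_smul, mul_comm]
  · exact (expSeries_summable' (𝕂 := ℂ) μ)

lemma mem_spec_iff' (M : Matrix (Fin n) (Fin n) ℂ) (μ : ℂ) :
    μ ∈ spectrum ℂ M ↔ End.HasEigenvalue (Matrix.toLin' M) μ := by
  rw [← AlgEquiv.spectrum_eq (Matrix.toLinAlgEquiv <| Pi.basisFun ℂ (Fin n)),
    ← Module.End.hasEigenvalue_iff_mem_spectrum]
  rfl

lemma spec_exp (M : Matrix (Fin n) (Fin n) ℂ) {lam : ℂ}
    (h : lam ∈ spectrum ℂ (exp M)) : ∃ μ ∈ spectrum ℂ M, lam = Complex.exp μ := by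
  rw [mem_spec_iff'] at h
  obtain ⟨v, hv⟩ := h.exists_hasEigenvector
  set E := End.eigenspace (Matrix.toLin' (exp M)) lam with hE
  have hvE : v ∈ E := hv.1
  have : Nontrivial E := ⟨⟨v, hvE⟩, 0, by simp [Subtype.ext_iff, hv.2]⟩
  have hcomm : M * exp M = exp M * M := (Commute.exp_right rfl).eq
  have hinv : ∀ x ∈ E, Matrix.toLin' M x ∈ E := by
    intro x hx
    rw [hE, End.mem_eigenspace_iff] at hx ⊢
    have : Matrix.toLin' (exp M) (Matrix.toLin' M x) = Matrix.toLin' M (Matrix.toLin' (exp M) x) := by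
      simp only [Matrix.toLin'_apply, Matrix.mulVec_mulVec, hcomm]
    rw [this, hx, _root_.map_smul]
  let g : End ℂ E := (Matrix.toLin' M).restrict hinv
  obtain ⟨μ, hμ⟩ := End.exists_eigenvalue g
  obtain ⟨w, hw⟩ := hμ.exists_hasEigenvector
  have hw0 : (w : Fin n → ℂ) ≠ 0 := fun hc => hw.2 (Subtype.ext hc)
  have hMw : M *ᵥ (w : Fin n → ℂ) = μ • (w : Fin n → ℂ) := by
    have := hw.apply_eq_smul
    calc M *ᵥ (w : Fin n → ℂ) = Matrix.toLin' M (w : Fin n → ℂ) := (Matrix.toLin'_apply _ _).symm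
    _ = ((g w : E) : Fin n → ℂ) := rfl
    _ = μ • (w : Fin n → ℂ) := by rw [this]; rfl
  refine ⟨μ, ?_, ?_⟩
  · rw [mem_spec_iff']
    exact End.hasEigenvalue_of_hasEigenvector ⟨End.mem_eigenspace_iff.2 (by rw [Matrix.toLin'_apply, hMw]), hw0⟩
  · have h1 : exp M *ᵥ (w : Fin n → ℂ) = lam • (w : Fin n → ℂ) := by
      have h3 := Module.End.mem_eigenspace_iff.1 w.2
      rwa [Matrix.toLin'_apply] at h3
    have h2 := eig_exp M μ (w : Fin n → ℂ) hMw
    have := h1.symm.trans h2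
    have hsub : (lam - Complex.exp μ) • (w : Fin n → ℂ) = 0 := by
      rw [sub_smul, this, sub_self]
    rcases smul_eq_zero.1 hsub with h | h
    · exact sub_eq_zero.1 h
    · exact absurd h hw0

lemma norm_exp_decay (hn : 0 < n) (M : Matrix (Fin n) (Fin n) ℂ)
    (hM : ∀ μ ∈ spectrum ℂ M, μ.re < 0) :
    ∃ C ε : ℝ, 0 < C ∧ 0 < ε ∧ ∀ t : ℝ, 0 ≤ t → ‖exp (t • M)‖ ≤ C * Real.exp (-ε * t) := by
  have : Nonempty (Fin n) := ⟨⟨0, hn⟩⟩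
  set B := exp M with hB
  have hρ : spectralRadius ℂ B < 1 := by
    have hr1 : ((Matrix.finite_spectrum M).toFinset.sup fun μ => ‖Complex.exp μ‖₊) < 1 := by
      rw [Finset.sup_lt_iff (by norm_num : (⊥ : NNReal) < 1)]
      intro μ hμ
      rw [Set.Finite.mem_toFinset] at hμ
      have : ‖Complex.exp μ‖ < 1 := by
        rw [Complex.norm_exp]
        exact Real.exp_lt_one_iff.2 (hM μ hμ)
      exact_mod_cast this
    have hle : spectralRadius ℂ B ≤
        (((Matrix.finite_spectrum M).toFinset.sup fun μ => ‖Complex.exp μ‖₊ : NNReal) : ENNReal) := by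
      refine iSup₂_le fun lam hlam => ?_
      obtain ⟨μ, hμ, rfl⟩ := spec_exp M hlam
      exact ENNReal.coe_le_coe.2
        (Finset.le_sup (f := fun μ => ‖Complex.exp μ‖₊) ((Matrix.finite_spectrum M).mem_toFinset.2 hμ))
    exact lt_of_le_of_lt hle (by exact_mod_cast hr1)
  obtain ⟨k, hk1, hk⟩ : ∃ k : ℕ, 1 ≤ k ∧ ‖B ^ k‖ < 1 := by
    have := (spectrum.pow_nnnorm_pow_one_div_tendsto_nhds_spectralRadius B).eventually_lt_const hρ
    obtain ⟨k, hk1, hk⟩ := (this.and (Filter.eventually_ge_atTop 1)).exists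
    refine ⟨k, hk, ?_⟩
    by_contra hcon
    push_neg at hcon
    have h1 : (1 : ENNReal) ≤ (‖B ^ k‖₊ : ENNReal) := by exact_mod_cast hcon
    have : (1 : ENNReal) ≤ (‖B ^ k‖₊ : ENNReal) ^ (1 / (k : ℝ)) := by
      calc (1:ENNReal) = 1 ^ (1/(k:ℝ)) := (ENNReal.one_rpow _).symm
      _ ≤ _ := ENNReal.rpow_le_rpow h1 (by positivity)
    exact absurd hk1 (not_lt.2 this)
  set q : ℝ := max ‖B ^ k‖ (1/2) with hq
  have hq0 : 0 < q := lt_of_lt_of_le (by norm_num) (le_max_right _ _)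
  have hq1 : q < 1 := max_lt hk (by norm_num)
  have hBk : ‖B ^ k‖ ≤ q := le_max_left _ _
  have hlogq : Real.log q < 0 := Real.log_neg hq0 hq1
  have hkpos : (0:ℝ) < k := by exact_mod_cast hk1
  have hcont : Continuous fun s : ℝ => exp (s • M) :=
    exp_continuous.comp (continuous_id.smul continuous_const)
  obtain ⟨C0, hC0⟩ := (isCompact_Icc (a := (0:ℝ)) (b := (k:ℝ))).exists_bound_of_continuousOn
    hcont.continuousOn
  set C1 : ℝ := max C0 1 with hC1
  have hC1pos : 0 < C1 := lt_of_lt_of_le one_pos (le_max_right _ _)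
  have hC1b : ∀ s ∈ Set.Icc (0:ℝ) (k:ℝ), ‖exp (s • M)‖ ≤ C1 :=
    fun s hs => (hC0 s hs).trans (le_max_left _ _)
  refine ⟨C1 * Real.exp (-Real.log q), -Real.log q / k, by positivity,
    div_pos (neg_pos.2 hlogq) hkpos, fun t ht => ?_⟩
  set m : ℕ := ⌊t / k⌋₊ with hm
  have hmk : (m : ℝ) * k ≤ t := by
    have h1 := Nat.floor_le (by positivity : 0 ≤ t / k)
    calc (m : ℝ) * k ≤ (t / k) * k := by nlinarith
    _ = t := by field_simp
  have h2 : t / k < m + 1 := Nat.lt_floor_add_one (t / k)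
  have h2' : t < ((m:ℝ) + 1) * k := by
    calc t = (t / k) * k := by field_simp
    _ < ((m:ℝ)+1) * k := by nlinarith
  have hs1 : t - m * k ≤ k := by nlinarith
  have hsplit : exp (t • M) = (B ^ k) ^ m * exp ((t - m * k) • M) := by
    have hc : Commute (((m : ℝ) * k) • M) ((t - m * k) • M) :=
      ((Commute.refl M).smul_left _).smul_right _
    have h3 : exp (((m:ℝ) * k) • M) = (B ^ k) ^ m := by
      have h4 : ((m:ℝ) * k) • M = m • ((k:ℕ) • M) := by
        rw [← Nat.cast_smul_eq_nsmul ℝ m ((k:ℕ) • M), ← Nat.cast_smul_eq_nsmul ℝ k M, smul_smul]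
      rw [h4, Matrix.exp_nsmul, Matrix.exp_nsmul]
    calc exp (t • M) = exp ((((m:ℝ) * k) + (t - m * k)) • M) := by ring_nf
    _ = exp (((m:ℝ) * k) • M) * exp ((t - m * k) • M) := by
        rw [add_smul, Matrix.exp_add_of_commute _ _ hc]
    _ = _ := by rw [h3]
  have hpowle : ∀ m : ℕ, ‖(B ^ k) ^ m‖ ≤ q ^ m := by
    intro m
    induction m with
    | zero => simpa using norm_one.le
    | succ m ih =>
        calc ‖(B^k)^(m+1)‖ = ‖(B^k)^m * B^k‖ := by rw [pow_succ]
        _ ≤ ‖(B^k)^m‖ * ‖B^k‖ := norm_mul_le _ _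
        _ ≤ q^m * q := mul_le_mul ih hBk (norm_nonneg _) (by positivity)
        _ = q^(m+1) := by rw [pow_succ]
  have hqm : q ^ m ≤ Real.exp (-Real.log q) * Real.exp (-(-Real.log q / k) * t) := by
    rw [← Real.exp_log hq0, ← Real.exp_nat_mul, ← Real.exp_add]
    apply Real.exp_le_exp.2
    have hd : t / k - 1 < (m:ℝ) := by linarith
    have hmul := mul_le_mul_of_nonpos_right hd.le hlogq.le
    calc (m:ℝ) * Real.log q ≤ (t/k - 1) * Real.log q := hmul
    _ = -Real.log (Real.exp (Real.log q)) +
        -(-Real.log (Real.exp (Real.log q)) / k) * t := by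
          rw [Real.log_exp]; field_simp; ring
  calc ‖exp (t • M)‖ ≤ ‖(B ^ k) ^ m‖ * ‖exp ((t - m * k) • M)‖ := by
        rw [hsplit]; exact norm_mul_le _ _
  _ ≤ q ^ m * C1 := mul_le_mul (hpowle m)
        (hC1b _ ⟨by linarith, hs1⟩) (norm_nonneg _) (by positivity)
  _ ≤ (Real.exp (-Real.log q) * Real.exp (-(-Real.log q / k) * t)) * C1 :=
        mul_le_mul_of_nonneg_right hqm hC1pos.le
  _ = C1 * Real.exp (-Real.log q) * Real.exp (-(-Real.log q / k) * t) := by ring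


lemma spectrum_transpose (B : Matrix (Fin n) (Fin n) ℂ) : spectrum ℂ Bᵀ = spectrum ℂ B := by
  ext μ
  rw [spectrum.mem_iff, spectrum.mem_iff, not_iff_not,
    Matrix.isUnit_iff_isUnit_det, Matrix.isUnit_iff_isUnit_det]
  have h : algebraMap ℂ (Matrix (Fin n) (Fin n) ℂ) μ - Bᵀ = (algebraMap ℂ _ μ - B)ᵀ := by
    rw [Matrix.transpose_sub]
    congr 1
    rw [Algebra.algebraMap_eq_smul_one (A := Matrix (Fin n) (Fin n) ℂ),
      Matrix.transpose_smul, Matrix.transpose_one]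
  rw [h, Matrix.det_transpose]

lemma map_exp_ofReal (N : Matrix (Fin n) (Fin n) ℝ) :
    (exp N).map Complex.ofReal = exp (N.map Complex.ofReal) := by
  let f : Matrix (Fin n) (Fin n) ℝ →+* Matrix (Fin n) (Fin n) ℂ := Complex.ofRealHom.mapMatrix
  have hf : Continuous f := by
    simp only [f, RingHom.mapMatrix_apply]
    exact Continuous.matrix_map continuous_id Complex.continuous_ofReal
  have h := map_exp f hf N
  simp only [f, RingHom.mapMatrix_apply] at h
  have hco : ⇑Complex.ofRealHom = Complex.ofReal := rfl
  rw [hco] at h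
  exact h

lemma norm_map_ofReal (N : Matrix (Fin n) (Fin n) ℝ) : ‖N.map Complex.ofReal‖ = ‖N‖ := by
  rw [Matrix.linfty_opNorm_def, Matrix.linfty_opNorm_def]
  congr 1
  refine Finset.sup_congr rfl fun i _ => Finset.sum_congr rfl fun j _ => ?_
  simp [Matrix.map_apply]

lemma real_decay (hn : 0 < n) {A : Matrix (Fin n) (Fin n) ℝ} (hA : IsStable A) :
    ∃ C ε : ℝ, 0 < C ∧ 0 < ε ∧ ∀ t : ℝ, 0 ≤ t → ‖exp (t • A)‖ ≤ C * Real.exp (-ε * t) := by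
  obtain ⟨C, ε, hC, hε, h⟩ := norm_exp_decay hn (A.map Complex.ofReal) hA
  refine ⟨C, ε, hC, hε, fun t ht => ?_⟩
  have heq : ‖exp (t • A)‖ = ‖exp (t • A.map Complex.ofReal)‖ := by
    rw [← norm_map_ofReal (exp (t • A)), map_exp_ofReal]
    congr 2
    ext i j
    simp [Matrix.map_apply, Complex.real_smul]
  rw [heq]
  exact h t ht

lemma isStable_transpose {A : Matrix (Fin n) (Fin n) ℝ} (hA : IsStable A) : IsStable Aᵀ := by
  intro μ hμ
  apply hA
  rw [Matrix.transpose_map, spectrum_transpose] at hμ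
  exact hμ


noncomputable def Fm (A P : Matrix (Fin n) (Fin n) ℝ) (t : ℝ) : Matrix (Fin n) (Fin n) ℝ :=
  exp (t • A) * P * exp (t • Aᵀ)

lemma exp_cont (A : Matrix (Fin n) (Fin n) ℝ) : Continuous fun t : ℝ => exp (t • A) :=
  exp_continuous.comp (continuous_id.smul continuous_const)

lemma Fm_cont (A P : Matrix (Fin n) (Fin n) ℝ) : Continuous (Fm A P) :=
  ((exp_cont A).mul continuous_const).mul (exp_cont Aᵀ)

lemma entry_le_norm (M : Matrix (Fin n) (Fin n) ℝ) (i j : Fin n) : ‖M i j‖ ≤ ‖M‖ := by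
  rw [Matrix.linfty_opNorm_def]
  have h1 : ‖M i j‖₊ ≤ ∑ j', ‖M i j'‖₊ :=
    Finset.single_le_sum (f := fun j' => ‖M i j'‖₊) (fun _ _ => zero_le) (Finset.mem_univ j)
  have h2 : (∑ j', ‖M i j'‖₊) ≤ Finset.univ.sup fun i => ∑ j', ‖M i j'‖₊ :=
    Finset.le_sup (f := fun i => ∑ j', ‖M i j'‖₊) (Finset.mem_univ i)
  exact_mod_cast h1.trans h2

lemma Fm_bound (hn : 0 < n) {A : Matrix (Fin n) (Fin n) ℝ} (hA : IsStable A)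
    (P : Matrix (Fin n) (Fin n) ℝ) :
    ∃ c ε : ℝ, 0 < c ∧ 0 < ε ∧ ∀ t : ℝ, 0 ≤ t → ‖Fm A P t‖ ≤ c * Real.exp (-ε * t) := by
  obtain ⟨C₁, ε₁, hC₁, hε₁, h₁⟩ := real_decay hn hA
  obtain ⟨C₂, ε₂, hC₂, hε₂, h₂⟩ := real_decay hn (isStable_transpose hA)
  refine ⟨C₁ * C₂ * (‖P‖ + 1), ε₁ + ε₂, by positivity, by positivity, fun t ht => ?_⟩
  have hb : ‖Fm A P t‖ ≤ (C₁ * Real.exp (-ε₁ * t)) * ‖P‖ * (C₂ * Real.exp (-ε₂ * t)) := by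
    calc ‖Fm A P t‖ ≤ ‖exp (t • A) * P‖ * ‖exp (t • Aᵀ)‖ := norm_mul_le _ _
    _ ≤ ‖exp (t • A)‖ * ‖P‖ * ‖exp (t • Aᵀ)‖ :=
        mul_le_mul_of_nonneg_right (norm_mul_le _ _) (norm_nonneg _)
    _ ≤ (C₁ * Real.exp (-ε₁ * t)) * ‖P‖ * (C₂ * Real.exp (-ε₂ * t)) := by
        have e₁ := h₁ t ht
        have e₂ := h₂ t ht
        have hP : (0:ℝ) ≤ ‖P‖ := norm_nonneg _
        have := mul_le_mul_of_nonneg_right e₁ hP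
        exact mul_le_mul this e₂ (norm_nonneg _) (by positivity)
  refine hb.trans ?_
  rw [show -(ε₁ + ε₂) * t = (-ε₁ * t) + (-ε₂ * t) by ring, Real.exp_add]
  have hPle : ‖P‖ ≤ ‖P‖ + 1 := by linarith
  have h0 : (0:ℝ) < Real.exp (-ε₁*t) := Real.exp_pos _
  have h0' : (0:ℝ) < Real.exp (-ε₂*t) := Real.exp_pos _
  calc C₁ * Real.exp (-ε₁ * t) * ‖P‖ * (C₂ * Real.exp (-ε₂ * t))
      ≤ C₁ * Real.exp (-ε₁ * t) * (‖P‖+1) * (C₂ * Real.exp (-ε₂ * t)) := by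
        apply mul_le_mul_of_nonneg_right _ (by positivity)
        apply mul_le_mul_of_nonneg_left hPle (by positivity)
  _ = C₁ * C₂ * (‖P‖ + 1) * (Real.exp (-ε₁ * t) * Real.exp (-ε₂ * t)) := by ring

lemma Fm_integrable (hn : 0 < n) {A : Matrix (Fin n) (Fin n) ℝ} (hA : IsStable A)
    (P : Matrix (Fin n) (Fin n) ℝ) (i j : Fin n) :
    IntegrableOn (fun t => Fm A P t i j) (Set.Ioi (0:ℝ)) := by
  obtain ⟨c, ε, hc, hε, hb⟩ := Fm_bound hn hA P
  refine Integrable.mono' ((exp_neg_integrableOn_Ioi 0 hε).const_mul c)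
    (((Fm_cont A P).matrix_elem i j).aestronglyMeasurable.restrict) ?_
  refine (ae_restrict_iff' measurableSet_Ioi).2 (Filter.Eventually.of_forall fun t ht => ?_)
  exact (entry_le_norm _ i j).trans (hb t (le_of_lt ht))

lemma Fm_tendsto (hn : 0 < n) {A : Matrix (Fin n) (Fin n) ℝ} (hA : IsStable A)
    (P : Matrix (Fin n) (Fin n) ℝ) (i j : Fin n) :
    Filter.Tendsto (fun t => Fm A P t i j) Filter.atTop (nhds 0) := by
  obtain ⟨c, ε, hc, hε, hb⟩ := Fm_bound hn hA P
  apply squeeze_zero_norm' ((Filter.eventually_ge_atTop 0).mono fun t ht =>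
    (entry_le_norm _ i j).trans (hb t ht))
  have h1 : Filter.Tendsto (fun t : ℝ => -ε * t) Filter.atTop Filter.atBot := by
    apply Filter.Tendsto.const_mul_atTop_of_neg (neg_neg_iff_pos.2 hε) Filter.tendsto_id
  have := (Real.tendsto_exp_atBot.comp h1).const_mul c
  simpa using this

lemma comm_exp (A : Matrix (Fin n) (Fin n) ℝ) (t : ℝ) :
    A * exp (t • A) = exp (t • A) * A :=
  (Commute.exp_right ((Commute.refl A).smul_right t)).eq

lemma Fm_comm (A P : Matrix (Fin n) (Fin n) ℝ) (t : ℝ) :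
    A * Fm A P t + Fm A P t * Aᵀ = Fm A (A * P + P * Aᵀ) t := by
  unfold Fm
  have h1 := comm_exp A t
  have h2 := (comm_exp Aᵀ t).symm
  have step : A * (exp (t • A) * P * exp (t • Aᵀ)) + exp (t • A) * P * exp (t • Aᵀ) * Aᵀ
      = (A * exp (t • A)) * P * exp (t • Aᵀ)
        + exp (t • A) * P * (exp (t • Aᵀ) * Aᵀ) := by noncomm_ring
  rw [step, h1, h2]
  noncomm_ring

lemma Fm_hasDeriv (A P : Matrix (Fin n) (Fin n) ℝ) (t : ℝ) :
    HasDerivAt (Fm A P) (A * Fm A P t + Fm A P t * Aᵀ) t := by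
  have h1 := hasDerivAt_exp_smul_const (𝕂 := ℝ) A t
  have h2 := hasDerivAt_exp_smul_const (𝕂 := ℝ) Aᵀ t
  have h3 := (h1.mul_const P).mul h2
  convert h3 using 1
  · rfl
  · rfl
  · rfl
  · rfl
  unfold Fm
  erw [← comm_exp A t]
  noncomm_ring

lemma Fm_entry_hasDeriv (A P : Matrix (Fin n) (Fin n) ℝ) (t : ℝ) (i j : Fin n) :
    HasDerivAt (fun s => Fm A P s i j) ((A * Fm A P t + Fm A P t * Aᵀ) i j) t := by
  let e : Matrix (Fin n) (Fin n) ℝ →L[ℝ] ℝ :=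
    LinearMap.toContinuousLinearMap
      { toFun := fun M : Matrix (Fin n) (Fin n) ℝ => M i j
        map_add' := fun _ _ => rfl
        map_smul' := fun _ _ => rfl }
  exact (e.hasFDerivAt.comp_hasDerivAt t (Fm_hasDeriv A P t))

lemma key_integral (hn : 0 < n) {A : Matrix (Fin n) (Fin n) ℝ} (hA : IsStable A)
    (P : Matrix (Fin n) (Fin n) ℝ) (i j : Fin n) :
    ∫ t in Set.Ioi (0:ℝ), (A * Fm A P t + Fm A P t * Aᵀ) i j = - P i j := by
  have hFm0 : Fm A P 0 = P := by
    unfold Fm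
    simp [exp_zero]
  have h := integral_Ioi_of_hasDerivAt_of_tendsto
    (f := fun t => Fm A P t i j) (f' := fun t => (A * Fm A P t + Fm A P t * Aᵀ) i j)
    (a := 0) (m := 0)
    (((Fm_cont A P).matrix_elem i j).continuousWithinAt)
    (fun x _ => Fm_entry_hasDeriv A P x i j)
    ?_ (Fm_tendsto hn hA P i j)
  · rw [h]; simp [hFm0]
  · have : (fun t => (A * Fm A P t + Fm A P t * Aᵀ) i j)
        = fun t => Fm A (A * P + P * Aᵀ) t i j := by
      funext t; rw [Fm_comm]
    rw [this]
    exact Fm_integrable hn hA _ i j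


lemma Fm_def (A P : Matrix (Fin n) (Fin n) ℝ) (t : ℝ) :
    Fm A P t = NormedSpace.exp (t • A) * P * NormedSpace.exp (t • Aᵀ) := rfl

lemma exp_transpose_smul (A : Matrix (Fin n) (Fin n) ℝ) (t : ℝ) :
    exp (t • Aᵀ) = (exp (t • A))ᵀ := by
  rw [← Matrix.transpose_smul, Matrix.exp_transpose]

lemma Fm_symm (A : Matrix (Fin n) (Fin n) ℝ) {L : Matrix (Fin n) (Fin n) ℝ} (hL : L.IsSymm)
    (t : ℝ) : (Fm A L t)ᵀ = Fm A L t := by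
  unfold Fm
  rw [exp_transpose_smul, Matrix.transpose_mul, Matrix.transpose_mul,
    Matrix.transpose_transpose, hL, mul_assoc]

lemma quad_eq (A L : Matrix (Fin n) (Fin n) ℝ) (x : Fin n → ℝ) (t : ℝ) :
    x ⬝ᵥ (Fm A L t *ᵥ x) =
      ((exp (t • A))ᵀ *ᵥ x) ⬝ᵥ (L *ᵥ ((exp (t • A))ᵀ *ᵥ x)) := by
  unfold Fm
  rw [exp_transpose_smul, ← Matrix.mulVec_mulVec, ← Matrix.mulVec_mulVec,
    dotProduct_mulVec, Matrix.mulVec_transpose]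

lemma mulVec_exp_transpose_ne_zero (A : Matrix (Fin n) (Fin n) ℝ) (t : ℝ) {x : Fin n → ℝ}
    (hx : x ≠ 0) : (exp (t • A))ᵀ *ᵥ x ≠ 0 := by
  intro hc
  apply hx
  have hu : IsUnit ((exp (t • A))ᵀ) := by
    rw [Matrix.isUnit_iff_isUnit_det, Matrix.det_transpose, ← Matrix.isUnit_iff_isUnit_det]
    exact Matrix.isUnit_exp _
  obtain ⟨u, hu⟩ := hu
  calc x = (1 : Matrix (Fin n) (Fin n) ℝ) *ᵥ x := by simp
  _ = ((↑u⁻¹ * ↑u : Matrix (Fin n) (Fin n) ℝ)) *ᵥ x := by rw [u.inv_mul]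
  _ = (↑u⁻¹ : Matrix (Fin n) (Fin n) ℝ) *ᵥ ((↑u : Matrix (Fin n) (Fin n) ℝ) *ᵥ x) := by
      rw [Matrix.mulVec_mulVec]
  _ = 0 := by rw [hu, hc, Matrix.mulVec_zero]

end LyapAux
end Aux

open LyapAux in
/-- For `A` stable and `L` symmetric positive semidefinite, the integral
`R = ∫₀^∞ exp(A t) L exp(Aᵀ t) dt` converges (entrywise), `R` is symmetric positive
semidefinite, `R` is the unique solution of the Lyapunov equation `A R + R Aᵀ + L = 0`,
and if `L` is positive definite then so is `R`. -/
theorem stmt1 {n : ℕ} (A L : Matrix (Fin n) (Fin n) ℝ)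
    (hA : IsStable A) (hLsymm : L.IsSymm) (hL : L.PosSemidef)
    (R : Matrix (Fin n) (Fin n) ℝ)
    (hR : ∀ i j, R i j =
      ∫ t in Set.Ioi (0 : ℝ),
        (NormedSpace.exp (t • A) * L * NormedSpace.exp (t • Aᵀ)) i j) :
    (∀ i j, IntegrableOn
        (fun t : ℝ => (NormedSpace.exp (t • A) * L * NormedSpace.exp (t • Aᵀ)) i j)
        (Set.Ioi (0 : ℝ))) ∧
    R.IsSymm ∧ R.PosSemidef ∧
    A * R + R * Aᵀ + L = 0 ∧
    (∀ R' : Matrix (Fin n) (Fin n) ℝ, A * R' + R' * Aᵀ + L = 0 → R' = R) ∧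
    (L.PosDef → R.PosDef) := by
  rcases Nat.eq_zero_or_pos n with hn0 | hn
  · subst hn0
    refine ⟨fun i j => i.elim0, Subsingleton.elim _ _,
      ⟨Subsingleton.elim _ _, fun x => by simp [Subsingleton.elim x 0]⟩,
      Subsingleton.elim _ _, fun R' _ => Subsingleton.elim _ _,
      fun _ => ⟨Subsingleton.elim _ _, fun x hx => absurd (Subsingleton.elim x 0) hx⟩⟩
  -- main case
  have hRF : ∀ i j, R i j = ∫ t in Set.Ioi (0:ℝ), Fm A L t i j := hR
  have hint := fun i j => Fm_integrable hn hA L i j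
  have hsymmFm : ∀ t i j, Fm A L t j i = Fm A L t i j := by
    intro t i j
    conv_lhs => rw [← Fm_symm A hLsymm t]
    rw [Matrix.transpose_apply]
  have hsymm : R.IsSymm := by
    show Rᵀ = R
    ext i j
    rw [Matrix.transpose_apply, hRF j i, hRF i j]
    simp only [hsymmFm]
  have hherm : R.IsHermitian := by
    rw [Matrix.IsHermitian, Matrix.conjTranspose_eq_transpose_of_trivial]
    exact hsymm
  have hpt : ∀ (x : Fin n → ℝ) (M : Matrix (Fin n) (Fin n) ℝ),
      x ⬝ᵥ (M *ᵥ x) = ∑ i, ∑ j, x i * M i j * x j := by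
    intro x M
    simp [dotProduct, Matrix.mulVec, Finset.mul_sum, mul_assoc]
  have hentry_int : ∀ (x : Fin n → ℝ) i j,
      IntegrableOn (fun t => x i * Fm A L t i j * x j) (Set.Ioi (0:ℝ)) :=
    fun x i j => ((hint i j).const_mul (x i)).mul_const (x j)
  have hdot : ∀ x : Fin n → ℝ, x ⬝ᵥ (R *ᵥ x) = ∫ t in Set.Ioi (0:ℝ), x ⬝ᵥ (Fm A L t *ᵥ x) := by
    intro x
    rw [hpt x R]
    have h1 : ∀ i j, x i * R i j * x j = ∫ t in Set.Ioi (0:ℝ), x i * Fm A L t i j * x j := by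
      intro i j
      rw [hRF i j, ← MeasureTheory.integral_const_mul, ← MeasureTheory.integral_mul_const]
    calc ∑ i, ∑ j, x i * R i j * x j
        = ∑ i, ∑ j, ∫ t in Set.Ioi (0:ℝ), x i * Fm A L t i j * x j :=
          Finset.sum_congr rfl fun i _ => Finset.sum_congr rfl fun j _ => h1 i j
    _ = ∫ t in Set.Ioi (0:ℝ), ∑ i, ∑ j, x i * Fm A L t i j * x j := by
        rw [MeasureTheory.integral_finset_sum _
          (fun i _ => integrable_finset_sum _ fun j _ => hentry_int x i j)]
        exact Finset.sum_congr rfl fun i _ =>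
          (MeasureTheory.integral_finset_sum _ fun j _ => hentry_int x i j).symm
    _ = ∫ t in Set.Ioi (0:ℝ), x ⬝ᵥ (Fm A L t *ᵥ x) := by
        congr 1
        funext t
        rw [hpt x (Fm A L t)]
  have hpsd : R.PosSemidef := by
    refine PosSemidef.of_dotProduct_mulVec_nonneg hherm fun x => ?_
    rw [star_trivial, hdot x]
    apply setIntegral_nonneg measurableSet_Ioi
    intro t _
    rw [quad_eq]
    have := hL.dotProduct_mulVec_nonneg ((NormedSpace.exp (t • A))ᵀ *ᵥ x)
    rwa [star_trivial] at this
  have hARint1 : ∀ i j, IntegrableOn (fun t => (A * Fm A L t) i j) (Set.Ioi (0:ℝ)) := by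
    intro i j
    have : (fun t => (A * Fm A L t) i j) = fun t => ∑ l, A i l * Fm A L t l j := by
      funext t; rw [Matrix.mul_apply]
    rw [this]
    exact integrable_finset_sum _ fun l _ => (hint l j).const_mul _
  have hARint2 : ∀ i j, IntegrableOn (fun t => (Fm A L t * Aᵀ) i j) (Set.Ioi (0:ℝ)) := by
    intro i j
    have : (fun t => (Fm A L t * Aᵀ) i j) = fun t => ∑ l, Fm A L t i l * Aᵀ l j := by
      funext t; rw [Matrix.mul_apply]
    rw [this]
    exact integrable_finset_sum _ fun l _ => (hint i l).mul_const _
  have hAR : ∀ i j, (A * R + R * Aᵀ) i j = - L i j := by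
    intro i j
    have hsum1 : (A * R) i j = ∫ t in Set.Ioi (0:ℝ), (A * Fm A L t) i j := by
      rw [Matrix.mul_apply]
      have h2 : ∀ l, A i l * R l j = ∫ t in Set.Ioi (0:ℝ), A i l * Fm A L t l j := by
        intro l
        rw [hRF l j, MeasureTheory.integral_const_mul]
      rw [Finset.sum_congr rfl fun l _ => h2 l,
        ← MeasureTheory.integral_finset_sum _ (fun l _ => (hint l j).const_mul _)]
      rfl
    have hsum2 : (R * Aᵀ) i j = ∫ t in Set.Ioi (0:ℝ), (Fm A L t * Aᵀ) i j := by
      rw [Matrix.mul_apply]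
      have h2 : ∀ l, R i l * Aᵀ l j = ∫ t in Set.Ioi (0:ℝ), Fm A L t i l * Aᵀ l j := by
        intro l
        rw [hRF i l, MeasureTheory.integral_mul_const]
      rw [Finset.sum_congr rfl fun l _ => h2 l,
        ← MeasureTheory.integral_finset_sum _ (fun l _ => (hint i l).mul_const _)]
      rfl
    calc (A * R + R * Aᵀ) i j = (A * R) i j + (R * Aᵀ) i j := Matrix.add_apply _ _ _ _
    _ = (∫ t in Set.Ioi (0:ℝ), (A * Fm A L t) i j)
        + ∫ t in Set.Ioi (0:ℝ), (Fm A L t * Aᵀ) i j := by rw [hsum1, hsum2]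
    _ = ∫ t in Set.Ioi (0:ℝ), ((A * Fm A L t) i j + (Fm A L t * Aᵀ) i j) :=
        (MeasureTheory.integral_add (hARint1 i j) (hARint2 i j)).symm
    _ = ∫ t in Set.Ioi (0:ℝ), (A * Fm A L t + Fm A L t * Aᵀ) i j := rfl
    _ = - L i j := key_integral hn hA L i j
  have hlyap : A * R + R * Aᵀ + L = 0 := by
    ext i j
    simp [Matrix.add_apply, hAR i j]
  refine ⟨hint, hsymm, hpsd, hlyap, ?_, ?_⟩
  · -- uniqueness
    intro R' hR'eq
    have hval : A * R' + R' * Aᵀ = -L := eq_neg_of_add_eq_zero_left hR'eq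
    ext i j
    have h1 := key_integral hn hA R' i j
    have h2 : ∀ t : ℝ, A * Fm A R' t + Fm A R' t * Aᵀ = - Fm A L t := by
      intro t
      rw [Fm_comm, hval]
      unfold LyapAux.Fm
      rw [mul_neg, neg_mul]
    simp only [h2, Matrix.neg_apply] at h1
    rw [MeasureTheory.integral_neg, neg_inj] at h1
    rw [hRF i j]
    exact h1.symm
  · -- PosDef
    intro hLpd
    refine PosDef.of_dotProduct_mulVec_pos hherm fun x hx => ?_
    rw [star_trivial, hdot x]
    have hgpos : ∀ t : ℝ, 0 < x ⬝ᵥ (Fm A L t *ᵥ x) := by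
      intro t
      rw [quad_eq]
      have hy := mulVec_exp_transpose_ne_zero A t hx
      have := hLpd.dotProduct_mulVec_pos hy
      rwa [star_trivial] at this
    have hgint : IntegrableOn (fun t => x ⬝ᵥ (Fm A L t *ᵥ x)) (Set.Ioi (0:ℝ)) := by
      have heq : (fun t => ∑ i, ∑ j, x i * Fm A L t i j * x j)
          = fun t => x ⬝ᵥ (Fm A L t *ᵥ x) := funext fun t => (hpt x (Fm A L t)).symm
      rw [← heq]
      exact integrable_finset_sum _ fun i _ => integrable_finset_sum _ fun j _ => hentry_int x i j
    have h01 : 0 < ∫ t in Set.Ioc (0:ℝ) 1, x ⬝ᵥ (Fm A L t *ᵥ x) := by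
      rw [← intervalIntegral.integral_of_le zero_le_one]
      refine intervalIntegral.intervalIntegral_pos_of_pos_on ?_ (fun t _ => hgpos t) zero_lt_one
      exact intervalIntegrable_iff.2 (by
        rw [Set.uIoc_of_le zero_le_one]
        exact hgint.mono_set Set.Ioc_subset_Ioi_self)
    have hmono : (∫ t in Set.Ioc (0:ℝ) 1, x ⬝ᵥ (Fm A L t *ᵥ x))
        ≤ ∫ t in Set.Ioi (0:ℝ), x ⬝ᵥ (Fm A L t *ᵥ x) := by
      refine setIntegral_mono_set hgint
        (Filter.Eventually.of_forall fun t => (hgpos t).le)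
        (Filter.Eventually.of_forall ?_)
      exact Set.Ioc_subset_Ioi_self
    linarith
end

section
/- Let D be a diagonal n×n real matrix with pairwise distinct diagonal entries, let M ⊆ {1,…,n} with |M| = p, let M̄ be its complement, and let E = Σ_{i∈M} Σ_{ii}. Then the linear map Ω ↦ [D, [E, Ω]] is injective on the linear span of { Ω_{ij} : i ∈ M, j ∈ M̄ }; that is, if Ω lies in this span and [D, [E, Ω]] = 0 then Ω = 0. -/
open Matrix

/-- `Om i j` is the skew-symmetric matrix `Ω_{ij}` with `(i,j)` entry `1`,
`(j,i)` entry `-1` and zeros elsewhere. -/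
def Om {n : ℕ} (i j : Fin n) : Matrix (Fin n) (Fin n) ℝ :=
  Matrix.single i j 1 - Matrix.single j i 1

/-- Let `D` be diagonal with pairwise distinct diagonal entries, `M` a subset of the
index set and `E = ∑_{i ∈ M} Σ_{ii}`. Then `Ω ↦ [D, [E, Ω]]` is injective on the span
of `{ Ω_{ij} : i ∈ M, j ∉ M }`. -/
theorem stmt10 {n : ℕ} (d : Fin n → ℝ) (hd : Function.Injective d)
    (M : Finset (Fin n))
    (D E : Matrix (Fin n) (Fin n) ℝ)
    (hD : D = Matrix.diagonal d)
    (hE : E = ∑ i ∈ M, Matrix.single i i (1 : ℝ))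
    (Ω : Matrix (Fin n) (Fin n) ℝ)
    (hΩ : Ω ∈ Submodule.span ℝ
      {X : Matrix (Fin n) (Fin n) ℝ | ∃ i ∈ M, ∃ j ∉ M, X = Om i j})
    (hzero : D * (E * Ω - Ω * E) - (E * Ω - Ω * E) * D = 0) :
    Ω = 0 := by
  -- E is diagonal
  have hEdiag : E = Matrix.diagonal (fun i => if i ∈ M then (1:ℝ) else 0) := by
    subst hE
    ext a b
    rw [Matrix.sum_apply]
    by_cases h : a = b
    · subst h
      have hc : ∀ c ∈ M, Matrix.single c c (1:ℝ) a a = if c = a then 1 else 0 := by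
        intro c _; simp [Matrix.single]
      rw [Finset.sum_congr rfl hc, Finset.sum_ite_eq' M a (fun _ => (1:ℝ))]
      simp
    · have hc : ∀ c ∈ M, Matrix.single c c (1:ℝ) a b = 0 := by
        intro c _
        simp only [Matrix.single, Matrix.of_apply, ite_eq_right_iff, one_ne_zero]
        rintro ⟨rfl, rfl⟩
        exact absurd rfl h
      rw [Finset.sum_eq_zero hc]
      simp [Matrix.diagonal_apply_ne _ h]
  -- structural property of Ω from span
  have key : (∀ i j, ¬((i ∈ M ∧ j ∉ M) ∨ (j ∈ M ∧ i ∉ M)) → Ω i j = 0) ∧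
      (∀ i j, Ω j i = -Ω i j) := by
    refine Submodule.span_induction ?_ ?_ ?_ ?_ hΩ
    · rintro X ⟨i, hi, j, hj, rfl⟩
      constructor
      · intro a b hab
        simp only [Om, Matrix.sub_apply, Matrix.single, Matrix.of_apply]
        by_cases h1 : i = a ∧ j = b
        · exact absurd (Or.inl ⟨h1.1 ▸ hi, h1.2 ▸ hj⟩) hab
        · by_cases h2 : j = a ∧ i = b
          · exact absurd (Or.inr ⟨h2.2 ▸ hi, h2.1 ▸ hj⟩) hab
          · simp [h1, h2]
      · intro a b
        simp only [Om, Matrix.sub_apply, Matrix.single, Matrix.of_apply]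
        simp only [show (i = b ∧ j = a) ↔ (j = a ∧ i = b) from and_comm,
          show (j = b ∧ i = a) ↔ (i = a ∧ j = b) from and_comm]
        ring
    · exact ⟨fun _ _ _ => rfl, fun _ _ => by simp⟩
    · rintro X Y _ _ ⟨hX1, hX2⟩ ⟨hY1, hY2⟩
      refine ⟨fun i j h => ?_, fun i j => ?_⟩
      · simp [Matrix.add_apply, hX1 i j h, hY1 i j h]
      · simp only [Matrix.add_apply, hX2 i j, hY2 i j]; ring
    · rintro c X _ ⟨hX1, hX2⟩
      refine ⟨fun i j h => ?_, fun i j => ?_⟩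
      · simp [Matrix.smul_apply, hX1 i j h]
      · simp [Matrix.smul_apply, hX2 i j]
  obtain ⟨hsupp, hskew⟩ := key
  -- entrywise equation from hzero
  have hentry : ∀ i ∈ M, ∀ j ∉ M, Ω i j = 0 := by
    intro i hi j hj
    have h0 := Matrix.ext_iff.mpr hzero i j
    rw [hD, hEdiag] at h0
    simp only [Matrix.diagonal_mul, Matrix.mul_diagonal, Matrix.sub_apply,
      Matrix.zero_apply] at h0
    simp only [hi, hj, if_true, if_false, one_mul, mul_zero, mul_one, zero_mul, sub_zero] at h0
    have hne : d i ≠ d j := fun h => hj (hd h ▸ hi)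
    have hmul : (d i - d j) * Ω i j = 0 := by linarith [h0]
    rcases mul_eq_zero.mp hmul with h | h
    · exact absurd (sub_eq_zero.mp h) hne
    · exact h
  ext i j
  by_cases h : (i ∈ M ∧ j ∉ M) ∨ (j ∈ M ∧ i ∉ M)
  · rcases h with ⟨hi, hj⟩ | ⟨hj, hi⟩
    · simpa using hentry i hi j hj
    · have := hentry j hj i hi
      rw [Matrix.zero_apply, hskew j i, this, neg_zero]
  · simpa using hsupp i j h
end

section
/- Let D be a diagonal n×n real matrix with strictly increasing diagonal entries d₁ < d₂ < ⋯ < d_n, let M = {m₁ < ⋯ < m_p} ⊆ {1,…,n}, let m = m₁ + ⋯ + m_p, let E = Σ_{i∈M} Σ_{ii}, and consider the symmetric bilinear form H_E(Ω, Ω′) = tr([E, Ω] [D, Ω′]) on the p(n−p)-dimensional real vector space V spanned by { Ω_{ij} : i ∈ M, j ∉ M }. Then H_E is non-degenerate on V and its signature is (m − p(p+1)/2, np − p(p−1)/2 − m, 0): there is a basis of V diagonalizing H_E with exactly m − p(p+1)/2 positive diagonal entries, exactly np − p(p−1)/2 − m negative diagonal entries, and no zero diagonal entries. -/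
open Matrix Finset

lemma Om_apply {n : ℕ} (i j a b : Fin n) :
    Om i j a b = (if i = a ∧ j = b then (1:ℝ) else 0) - (if j = a ∧ i = b then 1 else 0) := rfl

lemma diag_comm {n : ℕ} (u : Fin n → ℝ) (X : Matrix (Fin n) (Fin n) ℝ) :
    Matrix.diagonal u * X - X * Matrix.diagonal u
      = Matrix.of (fun a b => (u a - u b) * X a b) := by
  ext a b
  simp [Matrix.diagonal_mul, Matrix.mul_diagonal]
  ring

lemma trace_comm_comm {n : ℕ} (u v : Fin n → ℝ) (X Y : Matrix (Fin n) (Fin n) ℝ) :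
    Matrix.trace ((Matrix.diagonal u * X - X * Matrix.diagonal u)
      * (Matrix.diagonal v * Y - Y * Matrix.diagonal v))
    = ∑ x : Fin n × Fin n,
        ((u x.1 - u x.2) * (v x.2 - v x.1)) * (X x.1 x.2 * Y x.2 x.1) := by
  rw [diag_comm, diag_comm, Fintype.sum_prod_type]
  simp only [Matrix.trace, Matrix.diag, Matrix.mul_apply, Matrix.of_apply]
  apply Finset.sum_congr rfl; intro a _
  apply Finset.sum_congr rfl; intro b _
  ring

lemma Hval {n : ℕ} (d : Fin n → ℝ) (M : Finset (Fin n)) {i j k l : Fin n}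
    (hi : i ∈ M) (hj : j ∉ M) (hk : k ∈ M) (hl : l ∉ M) :
    Matrix.trace ((Matrix.diagonal (fun a => if a ∈ M then (1:ℝ) else 0) * Om i j
        - Om i j * Matrix.diagonal (fun a => if a ∈ M then (1:ℝ) else 0))
      * (Matrix.diagonal d * Om k l - Om k l * Matrix.diagonal d))
    = if i = k ∧ j = l then 2 * (d i - d j) else 0 := by
  rw [trace_comm_comm]
  have hij : i ≠ j := fun h => hj (h ▸ hi)
  have hS : ∀ x : Fin n × Fin n, x ∉ ({(i,j), (j,i)} : Finset (Fin n × Fin n)) →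
      ((fun a => if a ∈ M then (1:ℝ) else 0) x.1 - (fun a => if a ∈ M then (1:ℝ) else 0) x.2)
        * (d x.2 - d x.1) * (Om i j x.1 x.2 * Om k l x.2 x.1) = 0 := by
    rintro ⟨a, b⟩ hx
    simp only [Finset.mem_insert, Finset.mem_singleton, Prod.mk.injEq, not_or, not_and] at hx
    have : Om i j a b = 0 := by
      rw [Om_apply]
      rcases hx with ⟨h1, h2⟩
      by_cases hia : i = a <;> by_cases hjb : j = b <;>
        by_cases hja : j = a <;> by_cases hib : i = b <;> simp_all
    rw [this]; ring
  rw [← Finset.sum_subset (Finset.subset_univ ({(i,j), (j,i)} : Finset (Fin n × Fin n)))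
      (fun x _ hx => hS x hx)]
  rw [Finset.sum_pair (by simp [Prod.ext_iff]; intro h; exact absurd h hij)]
  have hkj : k ≠ j := fun h => hj (h ▸ hk)
  have hil : i ≠ l := fun h => hl (h ▸ hi)
  simp only [Om_apply, hi, hj, hk, hl, if_pos, if_neg]
  by_cases h : i = k ∧ j = l
  · obtain ⟨h1, h2⟩ := h
    subst h1 h2
    simp [hij, hij.symm, hkj, hil, hi, hj]
    ring
  · have : ¬(k = i ∧ l = j) := fun ⟨a, b⟩ => h ⟨a.symm, b.symm⟩
    simp [hij, hij.symm, hkj, hil, hi, hj, h, this]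
    by_cases h1 : k = i <;> by_cases h2 : l = j <;> simp_all <;> ring

lemma E_eq_diagonal {n : ℕ} (M : Finset (Fin n)) :
    (∑ i ∈ M, Matrix.single i i (1:ℝ))
      = Matrix.diagonal (fun a => if a ∈ M then (1:ℝ) else 0) := by
  ext a b
  simp only [Finset.sum_apply, Matrix.sum_apply, Matrix.single, Matrix.of_apply,
    Matrix.diagonal_apply]
  by_cases hab : a = b
  · subst hab
    simp [Finset.sum_ite_eq' M a (fun _ => (1:ℝ))]
  · rw [if_neg hab]
    apply Finset.sum_eq_zero
    intro x _
    simp only [ite_eq_right_iff, and_imp]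
    intro h1 h2; exact absurd (h1.symm.trans h2) hab

lemma Om_apply_mem {n : ℕ} {M : Finset (Fin n)} {a b i j : Fin n}
    (ha : a ∈ M) (hj : j ∉ M) :
    Om a b i j = if a = i ∧ b = j then (1:ℝ) else 0 := by
  rw [Om_apply]
  have : ¬(b = i ∧ a = j) := fun ⟨_, h⟩ => hj (h ▸ ha)
  simp [this]

lemma omLinearIndependent {n : ℕ} (M : Finset (Fin n)) :
    LinearIndependent ℝ (fun x : {i // i ∈ M} × {j // j ∈ Mᶜ} => Om (x.1 : Fin n) (x.2 : Fin n)) := by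
  rw [Fintype.linearIndependent_iff]
  intro g hg x
  have h0 := congrFun (congrFun hg (x.1 : Fin n)) (x.2 : Fin n)
  rw [Matrix.sum_apply] at h0
  rw [show (0 : Matrix (Fin n) (Fin n) ℝ) (x.1 : Fin n) (x.2 : Fin n) = 0 from rfl] at h0
  rw [Finset.sum_eq_single x] at h0
  · simpa [Om_apply_mem x.1.2 (Finset.mem_compl.mp x.2.2)] using h0
  · intro y _ hyx
    have hy := Om_apply_mem (M := M) (a := (y.1 : Fin n)) (b := (y.2 : Fin n)) (i := (x.1 : Fin n)) (j := (x.2 : Fin n)) y.1.2 (Finset.mem_compl.mp x.2.2)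
    rw [Matrix.smul_apply, hy]
    have : ¬((y.1 : Fin n) = (x.1 : Fin n) ∧ (y.2 : Fin n) = (x.2 : Fin n)) := by
      intro ⟨h1, h2⟩
      exact hyx (Prod.ext (Subtype.ext h1) (Subtype.ext h2))
    rw [if_neg this, smul_zero]
  · intro hx; exact absurd (Finset.mem_univ x) hx

lemma card_pairs {n : ℕ} (M : Finset (Fin n)) :
    ((M ×ˢ Mᶜ).filter (fun x => x.2 < x.1)).card
      + ∑ i ∈ M, (M.filter (· < i)).card = ∑ i ∈ M, (i : ℕ) := by
  rw [Finset.card_filter, Finset.sum_product, ← Finset.sum_add_distrib]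
  apply Finset.sum_congr rfl
  intro i hi
  rw [← Finset.card_filter]
  have h1 : Mᶜ.filter (· < i) = Finset.Iio i \ M := by
    ext j; simp [Finset.mem_compl, Finset.mem_Iio, and_comm]
  have h2 : M.filter (· < i) = Finset.Iio i ∩ M := by
    ext j; simp [Finset.mem_Iio, and_comm]
  rw [h1, h2, Finset.card_sdiff_add_card_inter, Fin.card_Iio]

lemma rankLeAux {n : ℕ} (M : Finset (Fin n)) (i : Fin n) :
    (M.filter (· < i)).card ≤ (i : ℕ) := by
  calc (M.filter (· < i)).card ≤ (Finset.Iio i).card := by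
        apply Finset.card_le_card
        intro j hj
        simp only [Finset.mem_filter] at hj
        exact Finset.mem_Iio.mpr hj.2
    _ = (i : ℕ) := Fin.card_Iio i

lemma rank_sum {n p : ℕ} (M : Finset (Fin n)) (hcard : M.card = p) :
    2 * ∑ i ∈ M, (M.filter (· < i)).card = p * (p - 1) := by
  set f := M.orderEmbOfFin hcard with hf
  have hrange : ∀ x, x ∈ M ↔ ∃ k, f k = x := by
    intro x
    rw [← Finset.mem_coe, ← Finset.range_orderEmbOfFin M hcard]
    exact Iff.rfl
  have himg : Finset.image (⇑f) Finset.univ = M := by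
    ext x
    simp only [Finset.mem_image, Finset.mem_univ, true_and]
    rw [hrange x]
  have hfil : ∀ k : Fin p, M.filter (· < f k) = Finset.image (⇑f) (Finset.Iio k) := by
    intro k
    ext x
    simp only [Finset.mem_filter, Finset.mem_image, Finset.mem_Iio]
    constructor
    · rintro ⟨hx, hlt⟩
      obtain ⟨l, rfl⟩ := (hrange x).mp hx
      exact ⟨l, f.lt_iff_lt.mp hlt, rfl⟩
    · rintro ⟨l, hl, rfl⟩
      exact ⟨(hrange (f l)).mpr ⟨l, rfl⟩, f.lt_iff_lt.mpr hl⟩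
  rw [show (∑ i ∈ M, (M.filter (· < i)).card)
      = ∑ i ∈ Finset.image (⇑f) Finset.univ, (M.filter (· < i)).card from by rw [himg]]
  rw [Finset.sum_image (fun a _ b _ h => f.injective h)]
  have : ∀ k ∈ Finset.univ, (M.filter (· < f k)).card = ((k : Fin p) : ℕ) := by
    intro k _
    rw [hfil k, Finset.card_image_of_injective _ f.injective, Fin.card_Iio]
  rw [Finset.sum_congr rfl this, mul_comm, Fin.sum_univ_eq_sum_range (fun x => x) p,
    Finset.sum_range_id_mul_two]

/-- Let `D` be diagonal with strictly increasing diagonal entries, `M ⊆ {1,…,n}` a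
`p`-element subset with element sum `m` (elements counted in `1,…,n`), and
`E = ∑_{i∈M} Σ_{ii}`. The symmetric bilinear form
`H(Ω,Ω') = tr([E,Ω][D,Ω'])` on the span `V` of `{Ω_{ij} : i ∈ M, j ∉ M}` is
non-degenerate with signature `(m − p(p+1)/2, np − p(p−1)/2 − m, 0)`: some basis of `V`
diagonalizes `H` with exactly `m − p(p+1)/2` positive, `np − p(p−1)/2 − m` negative and
no zero diagonal values. -/
theorem stmt13 {n p : ℕ} (hp1 : 1 ≤ p) (hpn : p ≤ n)
    (d : Fin n → ℝ) (hd : StrictMono d)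
    (M : Finset (Fin n)) (hcard : M.card = p)
    (m : ℕ) (hm : m = ∑ i ∈ M, ((i : ℕ) + 1))
    (D E : Matrix (Fin n) (Fin n) ℝ)
    (hD : D = Matrix.diagonal d)
    (hE : E = ∑ i ∈ M, Matrix.single i i (1 : ℝ))
    (H : Matrix (Fin n) (Fin n) ℝ → Matrix (Fin n) (Fin n) ℝ → ℝ)
    (hH : ∀ Ω Ω', H Ω Ω' =
      Matrix.trace ((E * Ω - Ω * E) * (D * Ω' - Ω' * D)))
    (V : Submodule ℝ (Matrix (Fin n) (Fin n) ℝ))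
    (hV : V = Submodule.span ℝ
      {X : Matrix (Fin n) (Fin n) ℝ | ∃ i ∈ M, ∃ j ∉ M, X = Om i j}) :
    (∀ Ω ∈ V, (∀ Ω' ∈ V, H Ω Ω' = 0) → Ω = 0) ∧
    ∃ b : Module.Basis (Fin (p * (n - p))) ℝ V,
      (∀ k l, k ≠ l → H (b k) (b l) = 0) ∧
      ({k : Fin (p * (n - p)) | 0 < H (b k) (b k)}.ncard = m - p * (p + 1) / 2) ∧
      ({k : Fin (p * (n - p)) | H (b k) (b k) < 0}.ncard
        = n * p - p * (p - 1) / 2 - m) ∧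
      (∀ k, H (b k) (b k) ≠ 0) := by
  subst hD hE hV
  -- the family and its basic properties
  set v : {i // i ∈ M} × {j // j ∈ Mᶜ} → Matrix (Fin n) (Fin n) ℝ :=
    fun x => Om (x.1 : Fin n) (x.2 : Fin n) with hv
  have hli := omLinearIndependent M
  have hrange : Set.range v
      = {X : Matrix (Fin n) (Fin n) ℝ | ∃ i ∈ M, ∃ j ∉ M, X = Om i j} := by
    ext X
    constructor
    · rintro ⟨⟨i, j⟩, rfl⟩
      exact ⟨i, i.2, j, Finset.mem_compl.mp j.2, rfl⟩
    · rintro ⟨i, hi, j, hj, rfl⟩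
      exact ⟨(⟨i, hi⟩, ⟨j, Finset.mem_compl.mpr hj⟩), rfl⟩
  have hVr : Submodule.span ℝ
      {X : Matrix (Fin n) (Fin n) ℝ | ∃ i ∈ M, ∃ j ∉ M, X = Om i j}
      = Submodule.span ℝ (Set.range v) := by rw [hrange]
  have hcardι : Fintype.card ({i // i ∈ M} × {j // j ∈ Mᶜ}) = p * (n - p) := by
    simp [Fintype.card_prod, Fintype.card_coe, hcard, Finset.card_compl, Fintype.card_fin]
  let eqv : ({i // i ∈ M} × {j // j ∈ Mᶜ}) ≃ Fin (p * (n - p)) :=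
    Fintype.equivFinOfCardEq hcardι
  let b0 : Module.Basis ({i // i ∈ M} × {j // j ∈ Mᶜ}) ℝ
      (Submodule.span ℝ (Set.range v)) := Module.Basis.span hli
  let b1 := b0.map (LinearEquiv.ofEq _ _ hVr.symm)
  let b := b1.reindex eqv
  -- basis vectors
  have hb : ∀ k, ((b k : Matrix (Fin n) (Fin n) ℝ)) = v (eqv.symm k) := by
    intro k
    show ((b1.reindex eqv) k : Matrix (Fin n) (Fin n) ℝ) = _
    rw [Module.Basis.reindex_apply]
    show ((b0.map (LinearEquiv.ofEq _ _ hVr.symm)) (eqv.symm k) : Matrix (Fin n) (Fin n) ℝ) = _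
    rw [Module.Basis.map_apply, LinearEquiv.coe_ofEq_apply, Module.Basis.span_apply]
  -- H values on basis vectors
  have hEd := E_eq_diagonal M
  have hval : ∀ k l, H (b k) (b l) =
      if ((eqv.symm k).1 : Fin n) = ((eqv.symm l).1 : Fin n)
          ∧ ((eqv.symm k).2 : Fin n) = ((eqv.symm l).2 : Fin n)
        then 2 * (d ((eqv.symm k).1 : Fin n) - d ((eqv.symm k).2 : Fin n)) else 0 := by
    intro k l
    rw [hH, hb, hb, hEd, hv]
    exact Hval d M (eqv.symm k).1.2 (Finset.mem_compl.mp (eqv.symm k).2.2)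
      (eqv.symm l).1.2 (Finset.mem_compl.mp (eqv.symm l).2.2)
  have hdiag : ∀ k, H (b k) (b k) =
      2 * (d ((eqv.symm k).1 : Fin n) - d ((eqv.symm k).2 : Fin n)) := by
    intro k; rw [hval k k, if_pos ⟨rfl, rfl⟩]
  have hneq : ∀ k, ((eqv.symm k).1 : Fin n) ≠ ((eqv.symm k).2 : Fin n) := by
    intro k h
    exact (Finset.mem_compl.mp (eqv.symm k).2.2) (h ▸ (eqv.symm k).1.2)
  have hne0 : ∀ k, H (b k) (b k) ≠ 0 := by
    intro k
    rw [hdiag k]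
    have := hd.injective.ne (hneq k)
    intro h
    apply this
    have : d ((eqv.symm k).1 : Fin n) - d ((eqv.symm k).2 : Fin n) = 0 := by linarith
    linarith [this]
  have horth : ∀ k l, k ≠ l → H (b k) (b l) = 0 := by
    intro k l hkl
    rw [hval k l, if_neg]
    rintro ⟨h1, h2⟩
    exact hkl (by
      have : eqv.symm k = eqv.symm l := Prod.ext (Subtype.ext h1) (Subtype.ext h2)
      simpa using congrArg eqv this)
  -- bilinearity facts
  have Hadd : ∀ A B C, H (A + B) C = H A C + H B C := by
    intro A B C
    rw [hH, hH, hH,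
      show (∑ i ∈ M, Matrix.single i i (1:ℝ)) * (A + B)
          - (A + B) * (∑ i ∈ M, Matrix.single i i (1:ℝ))
        = ((∑ i ∈ M, Matrix.single i i (1:ℝ)) * A
            - A * (∑ i ∈ M, Matrix.single i i (1:ℝ)))
          + ((∑ i ∈ M, Matrix.single i i (1:ℝ)) * B
            - B * (∑ i ∈ M, Matrix.single i i (1:ℝ))) from by noncomm_ring,
      add_mul, Matrix.trace_add]
  have Hsmul : ∀ (c : ℝ) A C, H (c • A) C = c * H A C := by
    intro c A C
    rw [hH, hH, mul_smul_comm, smul_mul_assoc, ← smul_sub, smul_mul_assoc,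
      Matrix.trace_smul, smul_eq_mul]
  have Hzero : ∀ C, H 0 C = 0 := by
    intro C; rw [hH]; simp
  have Hsum : ∀ (C : Matrix (Fin n) (Fin n) ℝ) (s : Finset (Fin (p * (n - p))))
      (f : Fin (p * (n - p)) → Matrix (Fin n) (Fin n) ℝ),
      H (∑ x ∈ s, f x) C = ∑ x ∈ s, H (f x) C := by
    intro C s f
    induction s using Finset.induction_on with
    | empty => simpa using Hzero C
    | insert _ _ hx ih => rw [Finset.sum_insert hx, Finset.sum_insert hx, Hadd, ih]
  constructor
  · -- nondegeneracy
    intro Ω hΩ hort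
    have hrepr := congrArg Subtype.val (b.sum_repr ⟨Ω, hΩ⟩)
    rw [Submodule.coe_sum] at hrepr
    simp only [SetLike.val_smul] at hrepr
    have hc : ∀ l, b.repr ⟨Ω, hΩ⟩ l = 0 := by
      intro l
      have h0 := hort (b l) (b l).2
      rw [← hrepr, Hsum] at h0
      rw [Finset.sum_eq_single l] at h0
      · rw [Hsmul] at h0
        exact (mul_eq_zero.mp h0).resolve_right (hne0 l)
      · intro k _ hkl
        rw [Hsmul, horth k l hkl, mul_zero]
      · intro h; exact absurd (Finset.mem_univ l) h
    have h2 : b.repr ⟨Ω, hΩ⟩ = 0 := by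
      ext l; exact hc l
    have hw0 : (⟨Ω, hΩ⟩ : Submodule.span ℝ
        {X : Matrix (Fin n) (Fin n) ℝ | ∃ i ∈ M, ∃ j ∉ M, X = Om i j}) = 0 :=
      (LinearEquiv.map_eq_zero_iff b.repr).mp h2
    have := congrArg Subtype.val hw0
    simpa using this
  · -- signature
    have hpos_iff : ∀ k, (0 < H (b k) (b k)) ↔
        ((eqv.symm k).2 : Fin n) < ((eqv.symm k).1 : Fin n) := by
      intro k
      rw [hdiag k]
      constructor
      · intro h
        have hlt : d ((eqv.symm k).2 : Fin n) < d ((eqv.symm k).1 : Fin n) := by linarith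
        exact hd.lt_iff_lt.mp hlt
      · intro h
        have := hd h
        linarith
    have hneg_iff : ∀ k, (H (b k) (b k) < 0) ↔
        ¬ (((eqv.symm k).2 : Fin n) < ((eqv.symm k).1 : Fin n)) := by
      intro k
      rw [← hpos_iff]
      constructor
      · intro h h2; linarith
      · intro h
        rcases lt_trichotomy (H (b k) (b k)) 0 with h1|h1|h1
        · exact h1
        · exact absurd h1 (hne0 k)
        · exact absurd h1 h
    classical
    set P : Fin (p * (n - p)) → Prop :=
      fun k => ((eqv.symm k).2 : Fin n) < ((eqv.symm k).1 : Fin n) with hP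
    have hposcard : ({k | 0 < H (b k) (b k)}).ncard = (Finset.univ.filter P).card := by
      rw [← Set.ncard_coe_finset]
      congr 1
      ext k
      simp [hpos_iff k, hP]
    have hnegcard : ({k | H (b k) (b k) < 0}).ncard
        = (Finset.univ.filter (fun k => ¬ P k)).card := by
      rw [← Set.ncard_coe_finset]
      congr 1
      ext k
      simp [hneg_iff k, hP]
    have htot : (Finset.univ.filter P).card + (Finset.univ.filter (fun k => ¬ P k)).card
        = p * (n - p) := by
      rw [Finset.card_filter_add_card_filter_not, Finset.card_univ, Fintype.card_fin]
    have hbij : (Finset.univ.filter P).card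
        = ((M ×ˢ Mᶜ).filter (fun x => x.2 < x.1)).card := by
      apply Finset.card_bij
        (fun k _ => (((eqv.symm k).1 : Fin n), ((eqv.symm k).2 : Fin n)))
      · intro k hk
        simp only [Finset.mem_filter, Finset.mem_product]
        exact ⟨⟨(eqv.symm k).1.2, (eqv.symm k).2.2⟩, (Finset.mem_filter.mp hk).2⟩
      · intro k1 h1 k2 h2 he
        have h1' : (eqv.symm k1) = (eqv.symm k2) :=
          Prod.ext (Subtype.ext (congrArg Prod.fst he)) (Subtype.ext (congrArg Prod.snd he))
        simpa using congrArg eqv h1'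
      · intro x hx
        rw [Finset.mem_filter, Finset.mem_product] at hx
        refine ⟨eqv (⟨x.1, hx.1.1⟩, ⟨x.2, hx.1.2⟩), ?_, ?_⟩
        · rw [Finset.mem_filter]
          refine ⟨Finset.mem_univ _, ?_⟩
          simp only [hP, Equiv.symm_apply_apply]
          exact hx.2
        · rw [Equiv.symm_apply_apply]
    have hA := card_pairs M
    have hB := rank_sum M hcard
    have hrs : ∑ i ∈ M, (M.filter (· < i)).card ≤ ∑ i ∈ M, (i : ℕ) :=
      Finset.sum_le_sum (fun i _ => rankLeAux M i)
    have hms : m = ∑ i ∈ M, (i : ℕ) + p := by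
      rw [hm, Finset.sum_add_distrib, Finset.sum_const, hcard, smul_eq_mul, mul_one]
    have hpp : p * (p - 1) + p = p * p := by
      cases p with
      | zero => simp
      | succ q => simp [Nat.succ_sub_one]; ring
    have hpp2 : p * (p + 1) = p * (p - 1) + 2 * p := by
      rw [Nat.mul_add, mul_one, ← hpp]; ring
    have hnp : p * (n - p) + p * p = n * p := by
      rw [← Nat.mul_add, Nat.sub_add_cancel hpn, Nat.mul_comm]
    refine ⟨b, horth, ?_, ?_, hne0⟩
    · rw [hposcard, hbij]
      set s1 := ∑ i ∈ M, (i : ℕ) with hs1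
      set r1 := ∑ i ∈ M, (M.filter (· < i)).card with hr1
      set A := ((M ×ˢ Mᶜ).filter (fun x => x.2 < x.1)).card with hAx
      set q1 := p * (p - 1) with hq1
      set q2 := p * (p + 1) with hq2
      set q3 := p * (n - p) with hq3
      set q4 := n * p with hq4
      set q5 := p * p with hq5
      omega
    · rw [hnegcard]
      set B := (Finset.univ.filter (fun k => ¬ P k)).card with hBx
      rw [hbij] at htot
      set s1 := ∑ i ∈ M, (i : ℕ) with hs1
      set r1 := ∑ i ∈ M, (M.filter (· < i)).card with hr1
      set A := ((M ×ˢ Mᶜ).filter (fun x => x.2 < x.1)).card with hAx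
      set q1 := p * (p - 1) with hq1
      set q2 := p * (p + 1) with hq2
      set q3 := p * (n - p) with hq3
      set q4 := n * p with hq4
      set q5 := p * p with hq5
      omega
end

section
/- Let A be a stable n×n real matrix, Q and L symmetric positive definite n×n matrices, and C a symmetric positive semidefinite n×n matrix. Let K₀ and R₀ be the unique solutions of Aᵀ K₀ + K₀ A + Q = 0 and A R₀ + R₀ Aᵀ + L = 0 respectively. Suppose K : [0, ε) → (n×n real matrices) is differentiable at 0 and satisfies Aᵀ K(γ) + K(γ) A − γ K(γ) C K(γ) + Q = 0 for every γ ∈ [0, ε). Then K(0) = K₀, the derivative K′(0) satisfies Aᵀ K′(0) + K′(0) A = K₀ C K₀, and the derivative of the cost γ ↦ tr(L K(γ)) at γ = 0 equals −tr(K₀ R₀ K₀ · C). -/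
open Matrix
open Polynomial

section Aux

variable {n : ℕ}

lemma aux_eval_charpoly (M : Matrix (Fin n) (Fin n) ℂ) (μ : ℂ) :
    M.charpoly.eval μ = (Matrix.scalar (Fin n) μ - M).det := by
  rw [Matrix.charpoly, eval_det, matPolyEquiv_charmatrix]
  simp

lemma aux_mem_spectrum_iff_det (M : Matrix (Fin n) (Fin n) ℂ) (μ : ℂ) :
    μ ∈ spectrum ℂ M ↔ (Matrix.scalar (Fin n) μ - M).det = 0 := by
  rw [spectrum.mem_iff, Matrix.isUnit_iff_isUnit_det, isUnit_iff_ne_zero, not_not]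
  rfl

lemma aux_lyap_unique (A D : Matrix (Fin n) (Fin n) ℝ) (hA : IsStable A)
    (h : Aᵀ * D + D * A = 0) : D = 0 := by
  rcases Nat.eq_zero_or_pos n with hn | hn
  · subst hn; ext i j; exact i.elim0
  haveI : Nonempty (Fin n) := ⟨⟨0, hn⟩⟩
  set φ : Matrix (Fin n) (Fin n) ℝ →+* Matrix (Fin n) (Fin n) ℂ :=
    Complex.ofRealHom.mapMatrix with hφ
  have hφapp : ∀ X : Matrix (Fin n) (Fin n) ℝ, φ X = X.map Complex.ofReal := fun X => rfl
  set Bc : Matrix (Fin n) (Fin n) ℂ := A.map Complex.ofReal with hBcdef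
  set Dc : Matrix (Fin n) (Fin n) ℂ := D.map Complex.ofReal with hDcdef
  have hMD : Bcᵀ * Dc = Dc * (-Bc) := by
    have h' : Aᵀ * D = D * (-A) := by
      rw [mul_neg]; exact eq_neg_of_add_eq_zero_left h
    have := congrArg φ h'
    rw [_root_.map_mul, _root_.map_mul, map_neg] at this
    rw [hφapp, hφapp, hφapp] at this
    rwa [Matrix.transpose_map] at this
  -- powers
  have hpow : ∀ k : ℕ, Bcᵀ ^ k * Dc = Dc * (-Bc) ^ k := by
    intro k
    induction k with
    | zero => simp
    | succ k ih =>
      rw [pow_succ', mul_assoc, ih, ← mul_assoc, hMD, mul_assoc, ← pow_succ']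
  -- polynomials
  have haeval : ∀ p : ℂ[X], (aeval Bcᵀ p) * Dc = Dc * aeval (-Bc) p := by
    intro p
    rw [aeval_eq_sum_range (x := Bcᵀ), aeval_eq_sum_range (x := -Bc),
      Finset.sum_mul, Finset.mul_sum]
    refine Finset.sum_congr rfl fun k _ => ?_
    rw [smul_mul_assoc, mul_smul_comm, hpow k]
  set q : ℂ[X] := Bcᵀ.charpoly with hq
  have hkey : Dc * aeval (-Bc) q = 0 := by
    rw [← haeval, hq, Matrix.aeval_self_charpoly, zero_mul]
  -- the evaluated matrix is invertible
  have hunit : IsUnit (aeval (-Bc) q) := by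
    rw [← spectrum.zero_notMem_iff ℂ]
    intro h0
    have hne : (spectrum ℂ (-Bc)).Nonempty :=
      spectrum.nonempty_of_isAlgClosed_of_finiteDimensional ℂ (-Bc)
    rw [spectrum.map_polynomial_aeval_of_nonempty (-Bc) q hne] at h0
    obtain ⟨μ, hμ, hμ0⟩ := h0
    -- μ ∈ spectrum (-Bc) means -μ ∈ spectrum Bc
    have hμ1 : -μ ∈ spectrum ℂ Bc := by
      rw [← spectrum.neg_eq] at hμ
      simpa using hμ
    have hre1 : (-μ).re < 0 := hA _ hμ1
    -- q.eval μ = 0 means μ ∈ spectrum Bc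
    have hμ2 : μ ∈ spectrum ℂ Bc := by
      rw [aux_mem_spectrum_iff_det]
      have : (Matrix.scalar (Fin n) μ - Bcᵀ).det = 0 := by
        rw [← aux_eval_charpoly]; exact hμ0
      calc (Matrix.scalar (Fin n) μ - Bc).det
          = ((Matrix.scalar (Fin n) μ - Bc)ᵀ).det := (Matrix.det_transpose _).symm
        _ = (Matrix.scalar (Fin n) μ - Bcᵀ).det := by
            rw [Matrix.transpose_sub]
            congr 1
            ext i j
            simp [Matrix.scalar_apply, Matrix.diagonal, Matrix.transpose_apply, eq_comm]
        _ = 0 := this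
    have hre2 : μ.re < 0 := hA _ hμ2
    simp only [Complex.neg_re] at hre1
    linarith
  -- conclude Dc = 0
  obtain ⟨u, hu⟩ := hunit
  have hDc0 : Dc = 0 := by
    have h3 : Dc * ((u : Matrix (Fin n) (Fin n) ℂ) * (↑u⁻¹ : Matrix (Fin n) (Fin n) ℂ)) = 0 := by
      rw [← mul_assoc, hu, hkey, zero_mul]
    rwa [Units.mul_inv, mul_one] at h3
  ext i j
  have := congrFun (congrFun hDc0 i) j
  simpa [hDcdef, Matrix.map_apply] using this

-- entrywise derivative helpers
variable {F G : ℝ → Matrix (Fin n) (Fin n) ℝ} {F' G' : Matrix (Fin n) (Fin n) ℝ}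
  {s : Set ℝ} {x : ℝ}

lemma aux_matmul_deriv (hF : ∀ i j, HasDerivWithinAt (fun γ => F γ i j) (F' i j) s x)
    (hG : ∀ i j, HasDerivWithinAt (fun γ => G γ i j) (G' i j) s x) (i j : Fin n) :
    HasDerivWithinAt (fun γ => (F γ * G γ) i j) ((F' * G x + F x * G') i j) s x := by
  have := HasDerivWithinAt.fun_sum (u := Finset.univ)
    (fun k (_ : k ∈ Finset.univ) => (hF i k).fun_mul (hG k j))
  simpa [Matrix.mul_apply, Matrix.add_apply, Finset.sum_add_distrib] using this

lemma aux_const_deriv (M : Matrix (Fin n) (Fin n) ℝ) (i j : Fin n) :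
    HasDerivWithinAt (fun _ : ℝ => M i j) ((0 : Matrix (Fin n) (Fin n) ℝ) i j) s x := by
  simpa using hasDerivWithinAt_const x s (M i j)

end Aux


/-- Let `K₀`, `R₀` solve `Aᵀ K₀ + K₀ A + Q = 0` and `A R₀ + R₀ Aᵀ + L = 0`, and let
`K(γ)` solve the Riccati equation `Aᵀ K(γ) + K(γ) A − γ K(γ) C K(γ) + Q = 0` on
`[0, ε)`, differentiable at `0`. Then `K(0) = K₀`, the derivative satisfies
`Aᵀ K′(0) + K′(0) A = K₀ C K₀`, and `(d/dγ) tr(L K(γ))|₀ = −tr(K₀ R₀ K₀ C)`. -/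
theorem stmt17 {n : ℕ} (A Q L C K₀ R₀ : Matrix (Fin n) (Fin n) ℝ)
    (hA : IsStable A) (hQsymm : Q.IsSymm) (hQ : Q.PosDef)
    (hLsymm : L.IsSymm) (hL : L.PosDef) (hCsymm : C.IsSymm) (hC : C.PosSemidef)
    (hK₀ : Aᵀ * K₀ + K₀ * A + Q = 0)
    (hR₀ : A * R₀ + R₀ * Aᵀ + L = 0)
    (ε : ℝ) (hε : 0 < ε)
    (K : ℝ → Matrix (Fin n) (Fin n) ℝ) (K' : Matrix (Fin n) (Fin n) ℝ)
    (hK : ∀ i j, HasDerivWithinAt (fun γ => K γ i j) (K' i j) (Set.Ici 0) 0)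
    (hRic : ∀ γ ∈ Set.Ico (0 : ℝ) ε,
      Aᵀ * K γ + K γ * A - γ • (K γ * C * K γ) + Q = 0) :
    K 0 = K₀ ∧
    Aᵀ * K' + K' * A = K₀ * C * K₀ ∧
    HasDerivWithinAt (fun γ => Matrix.trace (L * K γ))
      (-Matrix.trace (K₀ * R₀ * K₀ * C)) (Set.Ici 0) 0 := by
  -- K 0 solves the Lyapunov equation
  have hRic0 : Aᵀ * K 0 + K 0 * A + Q = 0 := by
    have := hRic 0 ⟨le_refl 0, hε⟩
    simpa using this
  have hK0 : K 0 = K₀ := by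
    have hD : Aᵀ * (K 0 - K₀) + (K 0 - K₀) * A = 0 := by
      have : Aᵀ * (K 0 - K₀) + (K 0 - K₀) * A
          = (Aᵀ * K 0 + K 0 * A + Q) - (Aᵀ * K₀ + K₀ * A + Q) := by
        rw [Matrix.mul_sub, Matrix.sub_mul]; abel
      rw [this, hRic0, hK₀, sub_zero]
    have := aux_lyap_unique A (K 0 - K₀) hA hD
    rwa [sub_eq_zero] at this
  -- derivative of the Riccati residual
  have hAK : ∀ i j, HasDerivWithinAt (fun γ => (Aᵀ * K γ) i j)
      ((Aᵀ * K') i j) (Set.Ici 0) 0 := by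
    intro i j
    have := aux_matmul_deriv (F := fun _ => Aᵀ) (G := K) (aux_const_deriv Aᵀ) hK i j
    simpa using this
  have hKA : ∀ i j, HasDerivWithinAt (fun γ => (K γ * A) i j)
      ((K' * A) i j) (Set.Ici 0) 0 := by
    intro i j
    have := aux_matmul_deriv (F := K) (G := fun _ => A) hK (aux_const_deriv A) i j
    simpa using this
  have hKC : ∀ i j, HasDerivWithinAt (fun γ => (K γ * C) i j)
      ((K' * C) i j) (Set.Ici 0) 0 := by
    intro i j
    have := aux_matmul_deriv (F := K) (G := fun _ => C) hK (aux_const_deriv C) i j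
    simpa using this
  have hKCK : ∀ i j, HasDerivWithinAt (fun γ => (K γ * C * K γ) i j)
      ((K' * C * K 0 + K 0 * C * K') i j) (Set.Ici 0) 0 := by
    intro i j
    have := aux_matmul_deriv (F := fun γ => K γ * C) (G := K) hKC hK i j
    simpa [mul_assoc] using this
  have hsmul : ∀ i j, HasDerivWithinAt (fun γ => (γ • (K γ * C * K γ)) i j)
      ((K 0 * C * K 0) i j) (Set.Ici 0) 0 := by
    intro i j
    have h1 := (hasDerivWithinAt_id (0 : ℝ) (Set.Ici 0)).fun_mul (hKCK i j)
    simpa [Matrix.smul_apply, smul_eq_mul] using h1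
  have hres : ∀ i j, HasDerivWithinAt
      (fun γ => (Aᵀ * K γ + K γ * A - γ • (K γ * C * K γ) + Q) i j)
      ((Aᵀ * K' + K' * A - K 0 * C * K 0) i j) (Set.Ici 0) 0 := by
    intro i j
    have := (((hAK i j).fun_add (hKA i j)).fun_sub (hsmul i j)).fun_add
      (hasDerivWithinAt_const (0 : ℝ) (Set.Ici 0) (Q i j))
    simpa [Matrix.add_apply, Matrix.sub_apply] using this
  have hres0 : ∀ i j, HasDerivWithinAt
      (fun γ => (Aᵀ * K γ + K γ * A - γ • (K γ * C * K γ) + Q) i j)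
      (0 : ℝ) (Set.Ici 0) 0 := by
    intro i j
    have hev : (fun γ => (Aᵀ * K γ + K γ * A - γ • (K γ * C * K γ) + Q) i j)
        =ᶠ[nhdsWithin 0 (Set.Ici 0)] fun _ => (0 : ℝ) := by
      filter_upwards [inter_mem_nhdsWithin (Set.Ici 0)
        (Iio_mem_nhds hε : Set.Iio ε ∈ nhds (0 : ℝ))] with γ hγ
      rw [hRic γ ⟨hγ.1, hγ.2⟩]
      simp
    refine (hasDerivWithinAt_const (0 : ℝ) (Set.Ici 0) (0 : ℝ)).congr_of_eventuallyEq hev ?_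
    rw [hRic 0 ⟨le_refl 0, hε⟩]
    simp
  have hderiv : Aᵀ * K' + K' * A = K₀ * C * K₀ := by
    have hzero : Aᵀ * K' + K' * A - K 0 * C * K 0 = 0 := by
      ext i j
      have h1 := (hres i j).derivWithin (uniqueDiffOn_Ici (0:ℝ) 0 Set.self_mem_Ici)
      have h2 := (hres0 i j).derivWithin (uniqueDiffOn_Ici (0:ℝ) 0 Set.self_mem_Ici)
      have := h1.symm.trans h2
      simpa using this
    rw [sub_eq_zero] at hzero
    rwa [hK0] at hzero
  refine ⟨hK0, hderiv, ?_⟩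
  -- trace derivative
  have hLK : ∀ i j, HasDerivWithinAt (fun γ => (L * K γ) i j)
      ((L * K') i j) (Set.Ici 0) 0 := by
    intro i j
    have := aux_matmul_deriv (F := fun _ => L) (G := K) (aux_const_deriv L) hK i j
    simpa using this
  have htr : HasDerivWithinAt (fun γ => Matrix.trace (L * K γ))
      (Matrix.trace (L * K')) (Set.Ici 0) 0 := by
    have := HasDerivWithinAt.fun_sum (u := Finset.univ)
      (fun i (_ : i ∈ Finset.univ) => hLK i i)
    simpa [Matrix.trace] using this
  have htreq : Matrix.trace (L * K') = -Matrix.trace (K₀ * R₀ * K₀ * C) := by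
    have hLeq : L = -(A * R₀ + R₀ * Aᵀ) := eq_neg_of_add_eq_zero_right hR₀
    calc Matrix.trace (L * K')
        = Matrix.trace (-(A * R₀ + R₀ * Aᵀ) * K') := by rw [← hLeq]
      _ = -(Matrix.trace (A * R₀ * K') + Matrix.trace (R₀ * Aᵀ * K')) := by
          rw [neg_mul, add_mul, Matrix.trace_neg, Matrix.trace_add]
      _ = -(Matrix.trace (R₀ * (K' * A)) + Matrix.trace (R₀ * (Aᵀ * K'))) := by
          rw [mul_assoc, Matrix.trace_mul_comm, mul_assoc, mul_assoc]
      _ = -Matrix.trace (R₀ * (Aᵀ * K' + K' * A)) := by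
          rw [Matrix.mul_add, Matrix.trace_add]; ring
      _ = -Matrix.trace (R₀ * (K₀ * C * K₀)) := by rw [hderiv]
      _ = -Matrix.trace (K₀ * R₀ * K₀ * C) := by
          have e1 : R₀ * (K₀ * C * K₀) = (R₀ * K₀ * C) * K₀ := by simp [mul_assoc]
          have e2 : K₀ * (R₀ * K₀ * C) = K₀ * R₀ * K₀ * C := by simp [mul_assoc]
          rw [e1, Matrix.trace_mul_comm, e2]
  rw [← htreq]
  exact htr
end
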